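/- For |a| < 1 and any b, (1/2πi) ∮_C ((z+b)/(z+a)²) · ((z^{-1}+b)/(z^{-1}+a)²) · z^{-1} dz = (4ab − (b²+1)(a²+1)) / (a²−1)³. -/

import Mathlib

open Metric Complex

theorem myCircleIntegral_add {f g : ℂ → ℂ} {c : ℂ} {R : ℝ} (hf : CircleIntegrable f c R)
    (hg : CircleIntegrable g c R) :
    (∮ z in C(c, R), f z + g z) = (∮ z in C(c, R), f z) + ∮ z in C(c, R), g z := by
  simp only [circleIntegral, smul_add, intervalIntegral.integral_add hf.out hg.out]

set_option maxHeartbeats 4000000 in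
/-- The metric tensor entry `g₁₁` of the scalar ARMA(1,1) parametrization:
`(1/2πi) ∮_C ((z+b)/(z+a)²)((z⁻¹+b)/(z⁻¹+a)²) z⁻¹ dz = (4ab-(b²+1)(a²+1))/(a²-1)³`
for `|a| < 1`. -/
theorem stmt9 (a b : ℂ) (ha : ‖a‖ < 1) :
    (1 / (2 * (Real.pi : ℂ) * Complex.I)) *
        (∮ z in C(0, 1), ((z + b) / (z + a) ^ 2) * ((z⁻¹ + b) / (z⁻¹ + a) ^ 2) * z⁻¹) =
      (4 * a * b - (b ^ 2 + 1) * (a ^ 2 + 1)) / (a ^ 2 - 1) ^ 3 := by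
  have hd : (a ^ 2 - 1 : ℂ) ≠ 0 := by
    intro h
    have h1 : a ^ 2 = 1 := by linear_combination h
    have : ‖a ^ 2‖ = 1 := by rw [h1]; simp
    rw [norm_pow] at this
    nlinarith [norm_nonneg a]
  set A : ℂ := (4 * a * b - (b ^ 2 + 1) * (a ^ 2 + 1)) / (a ^ 2 - 1) ^ 3 with hA
  set B : ℂ := (b - a) * (1 - a * b) / (a ^ 2 - 1) ^ 2 with hB
  set D : ℂ := -a ^ 2 * A with hD
  set E : ℂ := b - a * (2 - a ^ 2) * A - a ^ 2 * B with hE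
  have hza : ∀ z : ℂ, ‖z‖ = 1 → z + a ≠ 0 := by
    intro z hz h
    have hz' : z = -a := by linear_combination h
    rw [hz'] at hz
    simp only [norm_neg] at hz
    linarith
  have h1az : ∀ z : ℂ, ‖z‖ ≤ 1 → 1 + a * z ≠ 0 := by
    intro z hz h
    have hz' : a * z = -1 := by linear_combination h
    have : ‖a * z‖ = 1 := by rw [hz']; simp
    rw [norm_mul] at this
    nlinarith [norm_nonneg a, norm_nonneg z]
  have hpoly : ∀ z : ℂ, (z + b) * (1 + b * z)
      = A * ((z + a) * (1 + a * z) ^ 2) + B * (1 + a * z) ^ 2 + (E + D * z) * (z + a) ^ 2 := by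
    intro z
    simp only [hE, hD, hB, hA]
    field_simp [hd]
    ring
  have key : ∀ z ∈ sphere (0 : ℂ) 1,
      ((z + b) / (z + a) ^ 2) * ((z⁻¹ + b) / (z⁻¹ + a) ^ 2) * z⁻¹
        = A * (z - (-a))⁻¹ + (B * ((z - (-a)) ^ 2)⁻¹
            + (E + D * z) * ((1 + a * z) ^ 2)⁻¹) := by
    intro z hz
    rw [mem_sphere_zero_iff_norm] at hz
    have habs : ‖z‖ = 1 := hz
    have hz0 : z ≠ 0 := by
      intro h; rw [h] at habs; simp at habs
    have h1 : z + a ≠ 0 := hza z habs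
    have h2 : 1 + a * z ≠ 0 := h1az z (le_of_eq habs)
    have e1 : z⁻¹ + a = (1 + a * z) / z := by field_simp
    have e2 : z⁻¹ + b = (1 + b * z) / z := by field_simp
    have lhs_eq : (z + b) / (z + a) ^ 2 * ((1 + b * z) / z / ((1 + a * z) / z) ^ 2) * z⁻¹
        = ((z + b) * (1 + b * z)) * ((z + a) ^ 2 * (1 + a * z) ^ 2)⁻¹ := by
      rw [div_pow]
      field_simp [hz0, h1, h2]
    have rhs_eq : A * (z + a)⁻¹ + (B * ((z + a) ^ 2)⁻¹ + (E + D * z) * ((1 + a * z) ^ 2)⁻¹)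
        = (A * ((z + a) * (1 + a * z) ^ 2) + B * (1 + a * z) ^ 2 + (E + D * z) * (z + a) ^ 2)
            * ((z + a) ^ 2 * (1 + a * z) ^ 2)⁻¹ := by
      have h3 : (z + a) * (z + a)⁻¹ = 1 := mul_inv_cancel₀ h1
      have h4 : (1 + a * z) * (1 + a * z)⁻¹ = 1 := mul_inv_cancel₀ h2
      rw [mul_inv, ← inv_pow, ← inv_pow]
      linear_combination (-(A * (z + a)⁻¹ * ((1 + a * z) * (1 + a * z)⁻¹) ^ 2) - (E + D * z) * ((1 + a * z)⁻¹) ^ 2 * ((z + a) * (z + a)⁻¹ + 1)) * h3 + (-(A * (z + a)⁻¹ * ((1 + a * z) * (1 + a * z)⁻¹ + 1)) - B * ((z + a)⁻¹) ^ 2 * ((1 + a * z) * (1 + a * z)⁻¹ + 1)) * h4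
    rw [e1, e2, sub_neg_eq_add, lhs_eq, rhs_eq, ← hpoly z]
  have hi1 : CircleIntegrable (fun z : ℂ => A * (z - (-a))⁻¹) 0 1 := by
    apply ContinuousOn.circleIntegrable zero_le_one
    apply continuousOn_const.mul
    apply ContinuousOn.inv₀ (continuousOn_id.sub continuousOn_const)
    intro z hz
    rw [mem_sphere_zero_iff_norm] at hz
    show z - -a ≠ 0
    rw [sub_neg_eq_add]
    exact hza z hz
  have hi2 : CircleIntegrable (fun z : ℂ => B * ((z - (-a)) ^ 2)⁻¹) 0 1 := by
    apply ContinuousOn.circleIntegrable zero_le_one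
    apply continuousOn_const.mul
    apply ContinuousOn.inv₀ ((continuousOn_id.sub continuousOn_const).pow 2)
    intro z hz
    rw [mem_sphere_zero_iff_norm] at hz
    show (z - -a) ^ 2 ≠ 0
    rw [sub_neg_eq_add]
    exact pow_ne_zero 2 (hza z hz)
  have hi3 : CircleIntegrable (fun z : ℂ => (E + D * z) * ((1 + a * z) ^ 2)⁻¹) 0 1 := by
    apply ContinuousOn.circleIntegrable zero_le_one
    apply ContinuousOn.mul (continuousOn_const.add (continuousOn_const.mul continuousOn_id))
    apply ContinuousOn.inv₀
      ((continuousOn_const.add (continuousOn_const.mul continuousOn_id)).pow 2)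
    intro z hz
    rw [mem_sphere_zero_iff_norm] at hz
    exact pow_ne_zero 2 (h1az z (le_of_eq hz))
  have hI1 : (∮ z in C(0, 1), A * (z - (-a))⁻¹) = A * (2 * Real.pi * Complex.I) := by
    rw [circleIntegral.integral_const_mul]
    congr 1
    exact circleIntegral.integral_sub_inv_of_mem_ball (by
      rw [mem_ball_zero_iff]; simpa using ha)
  have hI2 : (∮ z in C(0, 1), B * ((z - (-a)) ^ 2)⁻¹) = 0 := by
    rw [circleIntegral.integral_const_mul]
    have hfun : ∀ z : ℂ, ((z - (-a)) ^ 2)⁻¹ = (z - (-a)) ^ (-2 : ℤ) := by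
      intro z; rw [zpow_neg, ← zpow_natCast]; norm_num
    simp only [hfun]
    rw [circleIntegral.integral_sub_zpow_of_ne (by decide) 0 (-a) 1]
    ring
  have hI3 : (∮ z in C(0, 1), (E + D * z) * ((1 + a * z) ^ 2)⁻¹) = 0 := by
    apply Complex.circleIntegral_eq_zero_of_differentiable_on_off_countable zero_le_one
      Set.countable_empty
    · apply ContinuousOn.mul (continuousOn_const.add (continuousOn_const.mul continuousOn_id))
      apply ContinuousOn.inv₀
        ((continuousOn_const.add (continuousOn_const.mul continuousOn_id)).pow 2)
      intro z hz
      rw [mem_closedBall_zero_iff] at hz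
      exact pow_ne_zero 2 (h1az z hz)
    · intro z hz
      rw [Set.diff_empty, mem_ball_zero_iff] at hz
      apply DifferentiableAt.mul
      · exact (differentiableAt_const _).add ((differentiableAt_const _).mul differentiableAt_id)
      · apply DifferentiableAt.inv
        · exact ((differentiableAt_const _).add
            ((differentiableAt_const _).mul differentiableAt_id)).pow 2
        · exact pow_ne_zero 2 (h1az z hz.le)
  have hi23 : CircleIntegrable (fun z : ℂ => B * ((z - (-a)) ^ 2)⁻¹
      + (E + D * z) * ((1 + a * z) ^ 2)⁻¹) 0 1 := hi2.add hi3
  rw [circleIntegral.integral_congr zero_le_one key,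
    myCircleIntegral_add hi1 hi23,
    myCircleIntegral_add hi2 hi3, hI1, hI2, hI3]
  have h2pi : (2 * (Real.pi : ℂ) * Complex.I) ≠ 0 := Complex.two_pi_I_ne_zero
  field_simp
  ring
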